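/- arXiv:1201.5505 — 6 statements merged into one kernel-verified Lean document; each statement's English description precedes it below -/
import Mathlib

section
/- Every subgroup of a finitely generated nilpotent group is finitely generated. -/
open Subgroup hiding lowerCentralSeries nilpotent_iff_lowerCentralSeries lowerCentralSeries_antitone
open scoped commutatorElement

section Aux

universe u

variable {G : Type*} [Group G]

theorem conj_eq_self_of_commute {M : Type*} [Group M] {c y : M} (h : Commute c y) :
    y * c * y⁻¹ = c := by
  rw [mul_inv_eq_iff_eq_mul]; exact h.symm.eq

/-- fg is preserved under map. -/
theorem Subgroup.FG.map' {G' : Type*} [Group G'] (f : G →* G') {H : Subgroup G}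
    (h : H.FG) : (H.map f).FG := by
  classical
  obtain ⟨S, hS⟩ := h
  exact ⟨S.image f, by rw [Finset.coe_image, ← MonoidHom.map_closure, hS]⟩

/-- Extension lemma: if the image and the intersection with the kernel are fg, so is H. -/
theorem fg_of_map_of_inf_ker {G' : Type*} [Group G'] (f : G →* G')
    {H : Subgroup G} (h1 : (H.map f).FG) (h2 : (H ⊓ f.ker).FG) : H.FG := by
  obtain ⟨S', hS'⟩ := h1
  obtain ⟨S, hS⟩ := h2
  -- lift the elements of S'
  have hlift : ∀ s' : G', s' ∈ (S' : Set G') → ∃ t, t ∈ H ∧ f t = s' := by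
    intro s' hs'
    have : s' ∈ H.map f := hS' ▸ subset_closure hs'
    obtain ⟨t, ht, rfl⟩ := this
    exact ⟨t, ht, rfl⟩
  choose lift hliftH hliftf using hlift
  classical
  let T : Finset G := S'.attach.image (fun s' => lift s'.1 s'.2)
  refine (Subgroup.fg_iff H).2 ⟨(S : Set G) ∪ (T : Set G), ?_, (S.finite_toSet.union T.finite_toSet)⟩
  apply le_antisymm
  · rw [Subgroup.closure_le]
    rintro x (hx | hx)
    · have : x ∈ H ⊓ f.ker := hS ▸ subset_closure hx
      exact this.1
    · simp only [T, Finset.coe_image, Set.mem_image] at hx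
      obtain ⟨⟨s', hs'⟩, -, rfl⟩ := hx
      exact hliftH s' hs'
  · intro h hh
    have hfh : f h ∈ Subgroup.closure (S' : Set G') := by
      rw [hS']; exact Subgroup.mem_map_of_mem f hh
    have hmap : Subgroup.closure (S' : Set G') ≤
        Subgroup.map f (Subgroup.closure ((T : Set G))) := by
      rw [Subgroup.closure_le]
      intro s' hs'
      refine ⟨lift s' hs', subset_closure ?_, hliftf s' hs'⟩
      simp only [T, Finset.coe_image, Set.mem_image]
      exact ⟨⟨s', hs'⟩, by simp, rfl⟩
    obtain ⟨g, hg, hfg⟩ := hmap hfh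
    have hker : h * g⁻¹ ∈ f.ker := by
      simp [MonoidHom.mem_ker, hfg]
    have hgH : g ∈ H := by
      have : Subgroup.closure (T : Set G) ≤ H := by
        rw [Subgroup.closure_le]
        rintro x hx
        simp only [T, Finset.coe_image, Set.mem_image] at hx
        obtain ⟨⟨s', hs'⟩, -, rfl⟩ := hx
        exact hliftH s' hs'
      exact this hg
    have hSmem : h * g⁻¹ ∈ Subgroup.closure ((S : Set G) ∪ (T : Set G)) := by
      apply Subgroup.closure_mono Set.subset_union_left
      rw [hS]
      exact ⟨H.mul_mem hh (H.inv_mem hgH), hker⟩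
    have hTmem : g ∈ Subgroup.closure ((S : Set G) ∪ (T : Set G)) :=
      Subgroup.closure_mono Set.subset_union_right hg
    simpa using mul_mem hSmem hTmem

theorem lowerCentralSeries_map_eq_of_surjective {G' : Type*} [Group G'] {f : G →* G'}
    (hf : Function.Surjective f) (n : ℕ) :
    (Subgroup.lowerCentralSeries (⊤ : Subgroup G) n).map f = Subgroup.lowerCentralSeries (⊤ : Subgroup G') n := by
  induction n with
  | zero => exact Subgroup.map_top_of_surjective f hf
  | succ n ih =>
    have h1 : Subgroup.lowerCentralSeries (⊤ : Subgroup G) (n + 1) = ⁅Subgroup.lowerCentralSeries (⊤ : Subgroup G) n, (⊤ : Subgroup G)⁆ := rfl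
    have h2 : Subgroup.lowerCentralSeries (⊤ : Subgroup G') (n + 1) = ⁅Subgroup.lowerCentralSeries (⊤ : Subgroup G') n, (⊤ : Subgroup G')⁆ := rfl
    rw [h1, h2, Subgroup.map_commutator, ih, Subgroup.map_top_of_surjective f hf]

/-- Key lemma: each lower central series quotient is finitely generated over the next. -/
theorem lcs_fg_mod_succ {T : Set G} (hTfin : T.Finite) (hT : Subgroup.closure T = ⊤) (i : ℕ) :
    ∃ S : Set G, S.Finite ∧ S ⊆ Subgroup.lowerCentralSeries (⊤ : Subgroup G) i ∧
      Subgroup.lowerCentralSeries (⊤ : Subgroup G) i = Subgroup.closure S ⊔ Subgroup.lowerCentralSeries (⊤ : Subgroup G) (i + 1) := by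
  induction i with
  | zero =>
    exact ⟨T, hTfin, fun x _ => Subgroup.mem_top x, by
      rw [hT]; exact (top_le_iff.mp le_sup_left).symm⟩
  | succ i ih =>
    obtain ⟨S, hSfin, hSsub, hSgen⟩ := ih
    refine ⟨(fun p : G × G => ⁅p.1, p.2⁆) '' (S ×ˢ T), (hSfin.prod hTfin).image _, ?_, ?_⟩
    · rintro x ⟨⟨s, t⟩, ⟨hs, _⟩, rfl⟩
      exact Subgroup.commutator_mem_commutator (hSsub hs) (Subgroup.mem_top t)
    · set C : Set G := (fun p : G × G => ⁅p.1, p.2⁆) '' (S ×ˢ T) with hC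
      set K := Subgroup.lowerCentralSeries (⊤ : Subgroup G) (i + 2) with hK
      set π : G →* G ⧸ K := QuotientGroup.mk' K with hπ
      have hπsurj : Function.Surjective π := QuotientGroup.mk'_surjective K
      have hkerπ : π.ker = K := QuotientGroup.ker_mk' K
      -- centrality of image of γ_{i+1}
      have hcent : ∀ z ∈ (Subgroup.lowerCentralSeries (⊤ : Subgroup G) (i + 1)).map π, ∀ q : G ⧸ K, Commute z q := by
        intro z hz q
        rw [← commutatorElement_eq_one_iff_commute]
        have : ⁅z, q⁆ ∈ ⁅(Subgroup.lowerCentralSeries (⊤ : Subgroup G) (i + 1)).map π, (⊤ : Subgroup (G ⧸ K))⁆ :=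
          Subgroup.commutator_mem_commutator hz (Subgroup.mem_top q)
        rw [← Subgroup.map_top_of_surjective π hπsurj, ← Subgroup.map_commutator] at this
        have hbot : ⁅Subgroup.lowerCentralSeries (⊤ : Subgroup G) (i + 1), (⊤ : Subgroup G)⁆ = K := rfl
        obtain ⟨w, hw, hwe⟩ := this
        rw [← hwe]
        have hwk : w ∈ π.ker := by rw [hkerπ]; exact hw
        simpa using hwk
      -- commutator of image of γ_i with anything lands in image of γ_{i+1}
      have hcomm_mem : ∀ a ∈ (Subgroup.lowerCentralSeries (⊤ : Subgroup G) i).map π, ∀ b : G ⧸ K,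
          ⁅a, b⁆ ∈ (Subgroup.lowerCentralSeries (⊤ : Subgroup G) (i + 1)).map π := by
        intro a ha b
        have : ⁅a, b⁆ ∈ ⁅(Subgroup.lowerCentralSeries (⊤ : Subgroup G) i).map π, (⊤ : Subgroup (G ⧸ K))⁆ :=
          Subgroup.commutator_mem_commutator ha (Subgroup.mem_top b)
        rwa [← Subgroup.map_top_of_surjective π hπsurj, ← Subgroup.map_commutator] at this
      set D : Subgroup (G ⧸ K) := Subgroup.closure (π '' C) with hD
      -- main claim
      have main : ∀ a ∈ (Subgroup.lowerCentralSeries (⊤ : Subgroup G) i).map π, ∀ b : G ⧸ K, ⁅a, b⁆ ∈ D := by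
        have hmapi : (Subgroup.lowerCentralSeries (⊤ : Subgroup G) i).map π =
            Subgroup.closure (π '' S ∪ ((Subgroup.lowerCentralSeries (⊤ : Subgroup G) (i+1)).map π : Set (G ⧸ K))) := by
          rw [Subgroup.closure_union, Subgroup.closure_eq, hSgen, Subgroup.map_sup,
            MonoidHom.map_closure]
        intro a ha
        rw [hmapi] at ha
        induction ha using Subgroup.closure_induction with
        | mem x hx =>
          rcases hx with hx | hx
          · -- x = π s, inner induction on b
            obtain ⟨s, hs, rfl⟩ := hx
            have hxmem : π s ∈ (Subgroup.lowerCentralSeries (⊤ : Subgroup G) i).map π :=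
              Subgroup.mem_map_of_mem π (hSsub hs)
            intro b
            have hb : b ∈ Subgroup.closure (π '' T) := by
              rw [← MonoidHom.map_closure, hT, Subgroup.map_top_of_surjective π hπsurj]
              exact Subgroup.mem_top b
            induction hb using Subgroup.closure_induction with
            | mem y hy =>
              obtain ⟨t, ht, rfl⟩ := hy
              apply Subgroup.subset_closure
              refine ⟨⁅s, t⁆, ⟨(s, t), ⟨hs, ht⟩, rfl⟩, ?_⟩
              simp [map_commutatorElement]
            | one =>
              rw [commutatorElement_one_right]
              exact D.one_mem
            | mul y z hy hz ihy ihz =>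
              have hcz : ∀ q : G ⧸ K, Commute ⁅π s, z⁆ q :=
                hcent _ (hcomm_mem _ hxmem z)
              have hid : ⁅π s, y * z⁆ = ⁅π s, y⁆ * (y * ⁅π s, z⁆ * y⁻¹) := by group
              rw [hid, conj_eq_self_of_commute (hcz y)]
              exact D.mul_mem ihy ihz
            | inv y hy ihy =>
              have hcy : ∀ q : G ⧸ K, Commute ⁅π s, y⁆ q :=
                hcent _ (hcomm_mem _ hxmem y)
              have hid : ⁅π s, y⁻¹⁆ = y⁻¹ * ⁅π s, y⁆⁻¹ * y⁻¹⁻¹ := by group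
              rw [hid, conj_eq_self_of_commute ((hcy y⁻¹).inv_left)]
              exact D.inv_mem ihy
          · -- x central
            intro b
            have : Commute x b := hcent x hx b
            rw [commutatorElement_eq_one_iff_commute.mpr this]
            exact D.one_mem
        | one =>
          intro b
          rw [commutatorElement_one_left]
          exact D.one_mem
        | mul x y hx hy ihx ihy =>
          intro b
          have hymem : y ∈ (Subgroup.lowerCentralSeries (⊤ : Subgroup G) i).map π := hmapi ▸ hy
          have hcy : ∀ q : G ⧸ K, Commute ⁅y, b⁆ q := hcent _ (hcomm_mem _ hymem b)
          have hid : ⁅x * y, b⁆ = (x * ⁅y, b⁆ * x⁻¹) * ⁅x, b⁆ := by group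
          rw [hid, conj_eq_self_of_commute (hcy x)]
          exact D.mul_mem (ihy b) (ihx b)
        | inv x hx ihx =>
          intro b
          have hxmem : x ∈ (Subgroup.lowerCentralSeries (⊤ : Subgroup G) i).map π := hmapi ▸ hx
          have hcx : ∀ q : G ⧸ K, Commute ⁅x, b⁆ q := hcent _ (hcomm_mem _ hxmem b)
          have hid : ⁅x⁻¹, b⁆ = x⁻¹ * ⁅x, b⁆⁻¹ * x⁻¹⁻¹ := by group
          rw [hid, conj_eq_self_of_commute ((hcx x⁻¹).inv_left)]
          exact D.inv_mem (ihx b)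
      -- conclude
      apply le_antisymm
      · have h1 : Subgroup.lowerCentralSeries (⊤ : Subgroup G) (i + 1) = ⁅Subgroup.lowerCentralSeries (⊤ : Subgroup G) i, (⊤ : Subgroup G)⁆ := rfl
        rw [h1, Subgroup.commutator_le]
        intro g hg x _
        have : π ⁅g, x⁆ ∈ D := by
          rw [map_commutatorElement]
          exact main (π g) (Subgroup.mem_map_of_mem π hg) (π x)
        have hcm : ⁅g, x⁆ ∈ Subgroup.comap π ((Subgroup.closure C).map π) := by
          rw [Subgroup.mem_comap]
          rwa [hD, ← MonoidHom.map_closure] at this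
        rw [Subgroup.comap_map_eq, hkerπ] at hcm
        exact hcm
      · apply sup_le
        · rw [Subgroup.closure_le]
          rintro x ⟨⟨s, t⟩, ⟨hs, _⟩, rfl⟩
          exact Subgroup.commutator_mem_commutator (hSsub hs) (Subgroup.mem_top t)
        · exact Subgroup.lowerCentralSeries_antitone ⊤ (Nat.le_succ _)

/-- Subgroups of fg "central" (commutative) subgroups are fg. -/
theorem fg_of_le_comm_fg {A B : Subgroup G} (hA : A.FG)
    (hcomm : ∀ x y : A, (x : G) * y = y * x) (hle : B ≤ A) : B.FG := by
  letI : CommGroup A :=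
    { (inferInstance : Group A) with mul_comm := fun a b => Subtype.ext (hcomm a b) }
  -- transfer to ℤ-modules
  haveI : Group.FG A := (Group.fg_iff_subgroup_fg A).mpr hA
  haveI : AddGroup.FG (Additive A) := GroupFG.iff_add_fg.mp inferInstance
  haveI : Module.Finite ℤ (Additive A) := Module.Finite.iff_addGroup_fg.mpr inferInstance
  haveI : IsNoetherian ℤ (Additive A) := isNoetherian_of_isNoetherianRing_of_finite ℤ _
  have hBA : (B.subgroupOf A).FG := by
    rw [Subgroup.fg_iff_add_fg]
    set N : AddSubgroup (Additive A) := (B.subgroupOf A).toAddSubgroup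
    have h1 : (AddSubgroup.toIntSubmodule N).FG := IsNoetherian.noetherian _
    rwa [Submodule.fg_iff_addSubgroup_fg, AddSubgroup.toIntSubmodule_toAddSubgroup] at h1
  have := hBA.map' A.subtype
  rwa [Subgroup.subgroupOf_map_subtype, inf_eq_left.mpr hle] at this

universe v

theorem aux_main (n : ℕ) : ∀ {G : Type v} [Group G], Group.FG G →
    Subgroup.lowerCentralSeries (⊤ : Subgroup G) n = ⊥ → ∀ H : Subgroup G, H.FG := by
  induction n with
  | zero =>
    intro G _ _ hbot H
    have : H = ⊥ := le_bot_iff.mp (hbot ▸ le_top)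
    exact ⟨∅, by simp [this]⟩
  | succ n ih =>
    intro G _ hfg hbot H
    obtain ⟨T, hTgen, hTfin⟩ := Group.fg_iff.mp hfg
    obtain ⟨S, hSfin, hSsub, hSgen⟩ := lcs_fg_mod_succ hTfin hTgen n
    set N := Subgroup.lowerCentralSeries (⊤ : Subgroup G) n with hN
    have hNfg : N.FG := by
      rw [Subgroup.fg_iff]
      exact ⟨S, by rw [hSgen, hbot, sup_bot_eq], hSfin⟩
    have hNcentral : ∀ x y : N, (x : G) * y = y * x := by
      intro x y
      have : ⁅(x : G), (y : G)⁆ ∈ ⁅N, (⊤ : Subgroup G)⁆ :=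
        Subgroup.commutator_mem_commutator x.2 (Subgroup.mem_top _)
      have hbot' : ⁅N, (⊤ : Subgroup G)⁆ = ⊥ := hbot
      rw [hbot', Subgroup.mem_bot, commutatorElement_eq_one_iff_commute] at this
      exact this
    set π : G →* G ⧸ N := QuotientGroup.mk' N with hπ
    have hπsurj : Function.Surjective π := QuotientGroup.mk'_surjective N
    have hkerπ : π.ker = N := QuotientGroup.ker_mk' N
    have hQbot : Subgroup.lowerCentralSeries (⊤ : Subgroup (G ⧸ N)) n = ⊥ := by
      rw [← lowerCentralSeries_map_eq_of_surjective hπsurj n, ← hN]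
      exact (Subgroup.map_eq_bot_iff _).mpr (le_of_eq hkerπ.symm)
    haveI : Group.FG (G ⧸ N) := QuotientGroup.fg N
    refine fg_of_map_of_inf_ker π (ih inferInstance hQbot (H.map π)) ?_
    exact fg_of_le_comm_fg hNfg hNcentral (by rw [hkerπ]; exact inf_le_right)

end Aux

/-- Every subgroup of a finitely generated nilpotent group is finitely
generated (P. Hall). -/
theorem subgroup_of_fg_nilpotent_is_fg (G : Type*) [Group G]
    (hfg : Group.FG G) (hnil : Group.IsNilpotent G) (H : Subgroup G) :
    Group.FG H := by
  haveI := hnil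
  obtain ⟨n, hn⟩ := nilpotent_iff_lowerCentralSeries.mp hnil
  rw [Group.fg_iff_subgroup_fg]
  exact aux_main n hfg hn H
end

section
/- Let A and B be linearly (fully) ordered groups, and let X be a subgroup of the Cartesian (unrestricted) wreath product A Wr B such that for every element bφ of X (with b ∈ B and φ: B → A), the support supp(φ) = {x ∈ B : φ(x) ≠ 1} is a well-ordered subset of B. Then X admits a linear order making it a fully ordered group (the order is compatible with multiplication on both sides). -/
/-- The action of `B` on the base group `B → A` of the Cartesian wreath
product, so that conjugation by `b` in the wreath product realizes
`f^b (b₀) = f (b₀ * b⁻¹)`. -/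
def wrAct (A B : Type*) [Group A] [Group B] : B →* MulAut (B → A) where
  toFun b :=
    { toFun := fun f x => f (x * b)
      invFun := fun f x => f (x * b⁻¹)
      left_inv := fun f => by funext x; simp [mul_assoc]
      right_inv := fun f => by funext x; simp [mul_assoc]
      map_mul' := fun f g => rfl }
  map_one' := by ext f x; simp
  map_mul' := fun b₁ b₂ => by ext f x; simp [mul_assoc]

/-- The Cartesian (unrestricted) wreath product `A Wr B = B ⋉ A^B`. -/
abbrev Wr (A B : Type*) [Group A] [Group B] : Type _ :=
  SemidirectProduct (B → A) B (wrAct A B)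

set_option linter.unusedSectionVars false

namespace WrOrderAux

variable {A B : Type*} [Group A] [Group B] [LinearOrder A] [LinearOrder B]
  [CovariantClass A A (· * ·) (· < ·)]
  [CovariantClass A A (Function.swap (· * ·)) (· < ·)]
  [CovariantClass B B (· * ·) (· < ·)]
  [CovariantClass B B (Function.swap (· * ·)) (· < ·)]

/-- The support of the base coordinate. -/
def supp (g : Wr A B) : Set B := {b | g.left b ≠ 1}

/-- Positivity predicate for our order on the wreath product. -/
def Pos (g : Wr A B) : Prop :=
  1 < g.right ∨ (g.right = 1 ∧ ∃ m, IsLeast (supp g) m ∧ 1 < g.left m)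

theorem one_lt_conj' {G : Type*} [Group G] [LinearOrder G]
    [CovariantClass G G (· * ·) (· < ·)]
    [CovariantClass G G (Function.swap (· * ·)) (· < ·)]
    {a : G} (x : G) (h : 1 < a) : 1 < x * a * x⁻¹ := by
  have h1 : x * 1 < x * a := mul_lt_mul_right h x
  have h2 : (x * 1) * x⁻¹ < (x * a) * x⁻¹ := mul_lt_mul_left h1 x⁻¹
  simpa using h2

theorem one_lt_mul'' {G : Type*} [Group G] [LinearOrder G]
    [CovariantClass G G (· * ·) (· < ·)]
    {a b : G} (ha : 1 < a) (hb : 1 < b) : 1 < a * b :=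
  lt_trans ha (by simpa using mul_lt_mul_right hb a)

theorem mul_left_apply (g h : Wr A B) (x : B) :
    (g * h).left x = g.left x * h.left (x * g.right) := rfl

theorem inv_left_apply (g : Wr A B) (x : B) :
    g⁻¹.left x = (g.left (x * g.right⁻¹))⁻¹ := rfl

theorem pos_one : ¬ Pos (1 : Wr A B) := by
  rintro (h | ⟨-, m, ⟨hm, -⟩, -⟩)
  · simp at h
  · simp [supp] at hm

theorem pos_mul {g h : Wr A B} (hg : (supp g).IsWF) (hh : (supp h).IsWF)
    (pg : Pos g) (ph : Pos h) : Pos (g * h) := by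
  rcases pg with hb | ⟨hb, m, hm, hlt⟩
  · left
    rw [SemidirectProduct.mul_right]
    rcases ph with hc | ⟨hc, -⟩
    · exact one_lt_mul'' hb hc
    · simpa [hc] using hb
  · rcases ph with hc | ⟨hc, n, hn, hltn⟩
    · left
      rw [SemidirectProduct.mul_right, hb, one_mul]; exact hc
    · right
      have hval : ∀ x, (g * h).left x = g.left x * h.left x := by
        intro x; rw [mul_left_apply, hb, mul_one]
      refine ⟨by rw [SemidirectProduct.mul_right, hb, hc, one_mul], ?_⟩
      have hD : (supp g ∪ supp h).IsWF := hg.union hh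
      have hne : (supp g ∪ supp h).Nonempty := ⟨m, Or.inl hm.1⟩
      set k := hD.min hne with hk
      have hkmem : k ∈ supp g ∪ supp h := hD.min_mem hne
      have hblw : ∀ x, x < k → g.left x = 1 ∧ h.left x = 1 := by
        intro x hx
        constructor
        · by_contra hgx
          exact hD.not_lt_min hne (Or.inl hgx) hx
        · by_contra hhx
          exact hD.not_lt_min hne (Or.inr hhx) hx
      have hgk : g.left k = 1 ∨ 1 < g.left k := by
        by_cases hks : k ∈ supp g
        · have h1 : m ≤ k := hm.2 hks
          have h2 : k ≤ m := le_of_not_gt (hD.not_lt_min hne (Or.inl hm.1))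
          right; rw [le_antisymm h2 h1]; exact hlt
        · left; simpa [supp] using hks
      have hhk : h.left k = 1 ∨ 1 < h.left k := by
        by_cases hks : k ∈ supp h
        · have h1 : n ≤ k := hn.2 hks
          have h2 : k ≤ n := le_of_not_gt (hD.not_lt_min hne (Or.inr hn.1))
          right; rw [le_antisymm h2 h1]; exact hltn
        · left; simpa [supp] using hks
      have hposk : 1 < (g * h).left k := by
        rw [hval]
        rcases hgk with e1 | l1 <;> rcases hhk with e2 | l2
        · exfalso; rcases hkmem with hk' | hk' <;> simp [supp, e1, e2] at hk'
        · simpa [e1] using l2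
        · simpa [e2] using l1
        · exact one_lt_mul'' l1 l2
      refine ⟨k, ⟨ne_of_gt hposk, ?_⟩, hposk⟩
      intro y hy
      by_contra hyk
      push_neg at hyk
      obtain ⟨e1, e2⟩ := hblw y hyk
      exact hy (by rw [hval, e1, e2, one_mul])

theorem pos_conj {g : Wr A B} (hg : (supp g).IsWF) (z : Wr A B) (pg : Pos g) :
    Pos (z * g * z⁻¹) := by
  have hright : (z * g * z⁻¹).right = z.right * g.right * z.right⁻¹ := rfl
  rcases pg with hb | ⟨hb, m, hm, hlt⟩
  · left; rw [hright]; exact one_lt_conj' z.right hb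
  · right
    have hr1 : (z * g * z⁻¹).right = 1 := by rw [hright, hb, mul_one, mul_inv_cancel]
    have hval : ∀ x, (z * g * z⁻¹).left x
        = z.left x * g.left (x * z.right) * (z.left x)⁻¹ := by
      intro x
      rw [mul_left_apply, mul_left_apply, inv_left_apply]
      rw [SemidirectProduct.mul_right, hb, mul_one]
      simp [mul_assoc]
    refine ⟨hr1, m * z.right⁻¹, ⟨?_, ?_⟩, ?_⟩
    · show (z * g * z⁻¹).left (m * z.right⁻¹) ≠ 1
      rw [hval, mul_assoc m, inv_mul_cancel, mul_one, Ne, conj_eq_one_iff]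
      exact hm.1
    · haveI : CovariantClass B B (Function.swap (· * ·)) (· ≤ ·) :=
        covariantClass_le_of_lt _ _ _
      intro y hy
      have : g.left (y * z.right) ≠ 1 := by
        intro e
        apply hy
        show (z * g * z⁻¹).left y = 1
        rw [hval, e, mul_one, mul_inv_cancel]
      have h1 : m ≤ y * z.right := hm.2 this
      have h2 := mul_le_mul_left h1 z.right⁻¹
      simpa [mul_assoc] using h2
    · rw [hval, mul_assoc m, inv_mul_cancel, mul_one]
      exact one_lt_conj' _ hlt

theorem pos_total {g : Wr A B} (hg : (supp g).IsWF) (hne : g ≠ 1) :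
    Pos g ∨ Pos g⁻¹ := by
  by_cases hb : g.right = 1
  · have hl : g.left ≠ 1 := by
      intro e
      exact hne (SemidirectProduct.ext e hb)
    have hsne : (supp g).Nonempty := by
      rcases Function.ne_iff.mp hl with ⟨x, hx⟩
      exact ⟨x, hx⟩
    set k := hg.min hsne with hk
    have hkmem : k ∈ supp g := hg.min_mem hsne
    have hleast : IsLeast (supp g) k :=
      ⟨hkmem, fun y hy => le_of_not_gt (hg.not_lt_min hsne hy)⟩
    rcases lt_or_gt_of_ne (hkmem : g.left k ≠ 1) with hlt | hgt
    · right
      have hinvl : ∀ x, g⁻¹.left x = (g.left x)⁻¹ := by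
        intro x; rw [inv_left_apply, hb, inv_one, mul_one]
      refine Or.inr ⟨by rw [SemidirectProduct.inv_right, hb, inv_one], k, ⟨?_, ?_⟩, ?_⟩
      · show g⁻¹.left k ≠ 1
        rw [hinvl]; simpa [supp] using hkmem
      · intro y hy
        refine hleast.2 ?_
        show g.left y ≠ 1
        intro e
        exact hy (by rw [hinvl, e, inv_one])
      · rw [hinvl]; exact Left.one_lt_inv_iff.mpr hlt
    · exact Or.inl (Or.inr ⟨hb, k, hleast, hgt⟩)
  · rcases lt_or_gt_of_ne hb with hlt | hgt
    · right; left
      rw [SemidirectProduct.inv_right]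
      exact Left.one_lt_inv_iff.mpr hlt
    · exact Or.inl (Or.inl hgt)

end WrOrderAux

/-- If `A` and `B` are fully (bi-invariantly linearly) ordered groups and `X`
is a subgroup of the Cartesian wreath product `A Wr B` such that every element
of `X` has well-ordered support in the base coordinate, then `X` can be fully
ordered: there is a linear order on `X` compatible with multiplication on both
sides. -/
theorem subgroup_of_wreath_with_wellOrdered_supports_is_fully_orderable
    (A B : Type*) [Group A] [Group B] [LinearOrder A] [LinearOrder B]
    [CovariantClass A A (· * ·) (· < ·)]
    [CovariantClass A A (Function.swap (· * ·)) (· < ·)]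
    [CovariantClass B B (· * ·) (· < ·)]
    [CovariantClass B B (Function.swap (· * ·)) (· < ·)]
    (X : Subgroup (Wr A B))
    (hsupp : ∀ g ∈ X, Set.IsWF {b : B | SemidirectProduct.left g b ≠ 1}) :
    ∃ lo : LinearOrder X,
      ∀ x y z : X, lo.lt x y → lo.lt (x * z) (y * z) ∧ lo.lt (z * x) (z * y) := by
  classical

  let r : X → X → Prop := fun x y => WrOrderAux.Pos ((y : Wr A B) * (x : Wr A B)⁻¹)
  have hWF : ∀ x y : X, (WrOrderAux.supp ((y : Wr A B) * (x : Wr A B)⁻¹)).IsWF := by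
    intro x y
    have hc : ((y * x⁻¹ : X) : Wr A B) = (y : Wr A B) * (x : Wr A B)⁻¹ := by push_cast; ring_nf
    have := hsupp _ (y * x⁻¹ : X).2
    rw [hc] at this
    exact this
  haveI hir : IsIrrefl X r := ⟨fun a h => by
    have h' : WrOrderAux.Pos ((a : Wr A B) * (a : Wr A B)⁻¹) := h
    rw [mul_inv_cancel] at h'
    exact WrOrderAux.pos_one h'⟩
  haveI htr : IsTrans X r := ⟨fun a b c hab hbc => by
    have := WrOrderAux.pos_mul (hWF b c) (hWF a b) hbc hab
    have he : ((c : Wr A B) * (b : Wr A B)⁻¹) * ((b : Wr A B) * (a : Wr A B)⁻¹)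
        = (c : Wr A B) * (a : Wr A B)⁻¹ := by group
    rwa [he] at this⟩
  haveI htri : IsTrichotomous X r := ⟨fun a b hab' hba' => (show r a b ∨ a = b ∨ r b a by
    rcases eq_or_ne a b with h | h
    · exact Or.inr (Or.inl h)
    have hne : ((b : Wr A B) * (a : Wr A B)⁻¹) ≠ 1 := by
      intro e
      exact h (Subtype.ext (by
        have := mul_inv_eq_one.mp e
        exact this.symm))
    rcases WrOrderAux.pos_total (hWF a b) hne with hp | hp
    · exact Or.inl hp
    · right; right
      have he : ((b : Wr A B) * (a : Wr A B)⁻¹)⁻¹ = (a : Wr A B) * (b : Wr A B)⁻¹ := by group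
      rwa [he] at hp).elim (fun h => absurd h hab') (fun h => h.elim id (fun h => absurd h hba'))⟩
  haveI : IsStrictOrder X r := ⟨⟩
  haveI : IsStrictTotalOrder X r := ⟨⟩
  haveI : DecidableRel r := Classical.decRel r
  refine ⟨linearOrderOfSTO r, fun x y z hxy => ?_⟩
  have hxy' : r x y := hxy
  constructor
  · show r (x * z) (y * z)
    show WrOrderAux.Pos (((y * z : X) : Wr A B) * ((x * z : X) : Wr A B)⁻¹)
    have he : (((y * z : X) : Wr A B) * ((x * z : X) : Wr A B)⁻¹)
        = (y : Wr A B) * (x : Wr A B)⁻¹ := by push_cast; group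
    rw [he]; exact hxy'
  · show r (z * x) (z * y)
    show WrOrderAux.Pos (((z * y : X) : Wr A B) * ((z * x : X) : Wr A B)⁻¹)
    have := WrOrderAux.pos_conj (hWF x y) (z : Wr A B) hxy'
    have he : (((z * y : X) : Wr A B) * ((z * x : X) : Wr A B)⁻¹)
        = (z : Wr A B) * ((y : Wr A B) * (x : Wr A B)⁻¹) * (z : Wr A B)⁻¹ := by push_cast; group
    rw [he]; exact this
end

section
/- Let W = (ℚ Wr C) Wr Z with C = ⟨c⟩, Z = ⟨z⟩ infinite cyclic, and let α ∈ (ℚ Wr C)^Z be defined by α(z^j) = 1 for j < 0, α(z⁰) = c, and α(z^j) = τⱼ for j > 0, where τⱼ(cⁱ) = -1/j for i ≥ 0 and 0 for i < 0. Then for every n > 0 and every j ∈ ℤ, the commutator [α^{z^{-n}}, α] evaluated at z^j equals φₙ if j = 0 and 1 otherwise, where φₙ(cⁱ) = 1/n if i = 0 and 0 otherwise. -/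
open SemidirectProduct Multiplicative

/-- `τⱼ ∈ ℚ^C`: `τⱼ(cⁱ) = -1/j` for `i ≥ 0` and `0` for `i < 0`. -/
def tau (j : ℤ) : Multiplicative ℤ → Multiplicative ℚ :=
  fun i => if 0 ≤ i.toAdd then ofAdd (-(1 / (j : ℚ))) else 1

/-- `φₙ ∈ ℚ^C`: `φₙ(cⁱ) = 1/n` for `i = 0` and `0` otherwise. -/
def phi (n : ℤ) : Multiplicative ℤ → Multiplicative ℚ :=
  fun i => if i.toAdd = 0 then ofAdd (1 / (n : ℚ)) else 1

/-- The element `α` of the base group `(ℚ Wr C)^Z` of `W = (ℚ Wr C) Wr Z`: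
`α(z^j) = 1` for `j < 0`, `α(z⁰) = c`, `α(z^j) = τⱼ` for `j > 0`. -/
def alpha : Multiplicative ℤ → Wr (Multiplicative ℚ) (Multiplicative ℤ) :=
  fun j =>
    if j.toAdd = 0 then inr (ofAdd (1 : ℤ))
    else if 0 < j.toAdd then inl (tau j.toAdd)
    else 1

lemma wrAct_apply {A B : Type*} [Group A] [Group B] (b : B) (f : B → A) (x : B) :
    wrAct A B b f x = f (x * b) := rfl

lemma wrAct_inv_apply {A B : Type*} [Group A] [Group B] (b : B) (f : B → A) (x : B) :
    (wrAct A B b)⁻¹ f x = f (x * b⁻¹) := rfl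

/-- For every `n > 0` and `j ∈ ℤ`, the commutator
`[α^{z^{-n}}, α] = (α^{z^{-n}})⁻¹ α⁻¹ α^{z^{-n}} α` (with `α^{z^{-n}}` the
conjugate of `α` by `z^{-n}`) evaluated at `z^j` equals `φₙ` if `j = 0` and `1`
otherwise. -/
theorem commutator_alpha_conj_alpha_eval (n : ℤ) (hn : 0 < n) (j : ℤ) :
    ((((inr (ofAdd (-n)) : Wr (Wr (Multiplicative ℚ) (Multiplicative ℤ))
            (Multiplicative ℤ))⁻¹ * inl alpha * inr (ofAdd (-n)))⁻¹ *
        (inl alpha)⁻¹ *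
        ((inr (ofAdd (-n)))⁻¹ * inl alpha * inr (ofAdd (-n))) *
        inl alpha).left (ofAdd j)) =
      if j = 0 then inl (phi n) else 1 := by
  simp only [mul_left, inv_left, mul_right, inv_right, left_inl, left_inr, right_inl, right_inr,
    one_mul, mul_one, inv_one, map_one, MulAut.one_apply, map_inv, inv_mul_cancel, inv_inv,
    Pi.mul_apply, Pi.inv_apply, wrAct_apply, wrAct_inv_apply]
  have hmul : Multiplicative.ofAdd j * (Multiplicative.ofAdd (-n))⁻¹ =
      Multiplicative.ofAdd (j + n) := by
    simp [← ofAdd_add, ← ofAdd_neg]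
  rw [hmul]
  rcases lt_trichotomy j 0 with hj | hj | hj
  · have h1 : alpha (Multiplicative.ofAdd j) = 1 := by
      simp [alpha, hj.ne, not_lt.2 hj.le]
    rw [if_neg hj.ne, h1]
    group
  · subst hj
    have h0 : alpha (Multiplicative.ofAdd (0 : ℤ)) = inr (ofAdd (1 : ℤ)) := by
      simp [alpha]
    have h2 : alpha (Multiplicative.ofAdd (0 + n)) = inl (tau n) := by
      simp [alpha, hn.ne', hn]
    rw [if_pos rfl, h0, h2]
    refine SemidirectProduct.ext ?_ ?_
    · simp only [mul_left, inv_left, mul_right, inv_right, left_inl, left_inr, right_inl,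
        right_inr, one_mul, mul_one, inv_one, map_one, MulAut.one_apply, map_inv, inv_mul_cancel,
        inv_inv, Pi.mul_apply, Pi.inv_apply, wrAct_apply, wrAct_inv_apply]
      funext i
      simp only [tau, phi, Pi.mul_apply, Pi.inv_apply, wrAct_inv_apply, toAdd_mul, toAdd_inv,
        toAdd_ofAdd]
      split_ifs with ha hb hc hd he <;>
        first
          | (exfalso; omega)
          | simp
    · simp [mul_right, inv_right]
  · have h1 : alpha (Multiplicative.ofAdd j) = inl (tau j) := by
      simp [alpha, hj.ne', hj]
    have h2 : alpha (Multiplicative.ofAdd (j + n)) = inl (tau (j + n)) := by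
      have : (0:ℤ) < j + n := by omega
      simp [alpha, this.ne', this]
    rw [if_neg hj.ne', h1, h2, ← map_inv, ← map_inv, ← map_mul, ← map_mul, ← map_mul]
    rw [show (tau (j+n))⁻¹ * (tau j)⁻¹ * tau (j+n) * tau j = 1 by
      funext i; simp [mul_comm, mul_left_comm, mul_assoc]]
    exact map_one inl
end

section
/- The map Φ: ℚ → (ℚ Wr C) Wr Z sending m/n (with n > 0) to [α^{z^{-n}}, α]^m is a well-defined injective group homomorphism from ℚ into the 2-generator subgroup G = ⟨α, z⟩. -/
open SemidirectProduct Multiplicative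

/-- The commutator `[α^{z^{-n}}, α] = (α^{z^{-n}})⁻¹ α⁻¹ α^{z^{-n}} α` in
`W = (ℚ Wr C) Wr Z`. -/
def commAlpha (n : ℤ) :
    Wr (Wr (Multiplicative ℚ) (Multiplicative ℤ)) (Multiplicative ℤ) :=
  ((inr (ofAdd (-n)))⁻¹ * inl alpha * inr (ofAdd (-n)))⁻¹ * (inl alpha)⁻¹ *
    ((inr (ofAdd (-n)))⁻¹ * inl alpha * inr (ofAdd (-n))) * inl alpha

lemma wrAct_symm_apply {A B : Type*} [Group A] [Group B] (b : B) (f : B → A) (x : B) :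
    (wrAct A B b).symm f x = f (x * b⁻¹) := rfl

lemma alpha_pos (x : Multiplicative ℤ) (hk : 0 < x.toAdd) : alpha x = inl (tau x.toAdd) := by
  simp [alpha, hk, hk.ne']

lemma alpha_neg (x : Multiplicative ℤ) (hk : x.toAdd < 0) : alpha x = 1 := by
  simp [alpha, hk.ne, hk.not_gt]

lemma ne_one_of_toAdd_ne (x : Multiplicative ℤ) (h : x.toAdd ≠ 0) : x ≠ 1 := by
  intro hx; exact h (by simp [hx])

lemma key (n : ℤ) (hn : 0 < n) :
    commAlpha n = inl (Pi.mulSingle (1 : Multiplicative ℤ)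
      (inl (Pi.mulSingle (1 : Multiplicative ℤ) (ofAdd ((1 : ℚ)/(n : ℚ)))))) := by
  apply SemidirectProduct.ext
  · funext x
    simp only [commAlpha, mul_left, inv_left, mul_right, inv_right, wrAct_apply]
    simp [wrAct_apply]
    have hsh : (x * ofAdd n).toAdd = x.toAdd + n := rfl
    rcases lt_trichotomy x.toAdd 0 with hk | hk | hk
    · rw [alpha_neg x hk, Pi.mulSingle_eq_of_ne (ne_one_of_toAdd_ne x hk.ne)]
      simp
    · have hx1 : x = 1 := by
        have := hk; exact toAdd_eq_zero.mp hk
      subst hx1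
      rw [show alpha 1 = inr (ofAdd (1:ℤ)) by simp [alpha],
        alpha_pos _ (by rw [hsh]; simpa using hn), Pi.mulSingle_eq_same, hsh]
      simp only [toAdd_one, zero_add]
      apply SemidirectProduct.ext
      · funext i
        simp only [mul_left, inv_left, mul_right, inv_right]
        simp [wrAct_apply, wrAct_symm_apply]
        have hsh2 : (i * (ofAdd (1:ℤ))⁻¹).toAdd = i.toAdd - 1 := rfl
        rcases lt_trichotomy i.toAdd 0 with hj | hj | hj
        · rw [Pi.mulSingle_eq_of_ne (ne_one_of_toAdd_ne i hj.ne)]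
          simp [tau, hsh2, hj.not_ge, (by linarith : ¬ (0:ℤ) ≤ i.toAdd - 1)] <;> omega
        · have hi1 : i = 1 := toAdd_eq_zero.mp hj
          subst hi1
          rw [Pi.mulSingle_eq_same]
          simp [tau, one_div]
        · rw [Pi.mulSingle_eq_of_ne (ne_one_of_toAdd_ne i hj.ne')]
          simp [tau, hsh2, hj.le, (by linarith : (0:ℤ) ≤ i.toAdd - 1)] <;> omega
      · simp
    · rw [alpha_pos x hk, alpha_pos _ (by rw [hsh]; linarith),
        Pi.mulSingle_eq_of_ne (ne_one_of_toAdd_ne x hk.ne')]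
      rw [← map_inv, ← map_inv, ← map_mul, ← map_mul, ← map_mul]
      rw [mul_assoc, mul_mul_mul_comm]
      simp
  · simp [commAlpha]

def Phi0 : Multiplicative ℚ →*
    Wr (Wr (Multiplicative ℚ) (Multiplicative ℤ)) (Multiplicative ℤ) :=
  (SemidirectProduct.inl).comp
    ((MonoidHom.mulSingle
        (fun _ : Multiplicative ℤ => Wr (Multiplicative ℚ) (Multiplicative ℤ)) 1).comp
      ((SemidirectProduct.inl).comp
        (MonoidHom.mulSingle (fun _ : Multiplicative ℤ => Multiplicative ℚ) 1)))

lemma Phi0_apply (q : Multiplicative ℚ) :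
    Phi0 q = inl (Pi.mulSingle (1 : Multiplicative ℤ)
      (inl (Pi.mulSingle (1 : Multiplicative ℤ) q))) := rfl

lemma Phi0_injective : Function.Injective Phi0 := by
  intro a b h
  simp only [Phi0_apply] at h
  have h2 := congrFun (inl_injective h) (1 : Multiplicative ℤ)
  simp only [Pi.mulSingle_eq_same] at h2
  have h3 := congrFun (inl_injective h2) (1 : Multiplicative ℤ)
  simpa using h3

lemma Phi0_spec (m n : ℤ) (hn : 0 < n) :
    Phi0 (ofAdd ((m : ℚ) / (n : ℚ))) = (commAlpha n) ^ m := by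
  rw [key n hn, ← Phi0_apply, ← map_zpow]
  congr 1
  rw [show ((m : ℚ) / (n : ℚ)) = m • ((1 : ℚ) / (n : ℚ)) by rw [zsmul_eq_mul]; ring,
    ofAdd_zsmul]

/-- The map `Φ : ℚ → (ℚ Wr C) Wr Z`, `m/n ↦ [α^{z^{-n}}, α]^m` (for `n > 0`),
is a well-defined injective group homomorphism whose image lies in the
2-generator subgroup `G = ⟨α, z⟩`. -/
theorem exists_embedding_of_q_into_two_generator_subgroup :
    ∃ Φ : Multiplicative ℚ →*
        Wr (Wr (Multiplicative ℚ) (Multiplicative ℤ)) (Multiplicative ℤ),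
      Function.Injective Φ ∧
      (∀ m n : ℤ, 0 < n →
        Φ (ofAdd ((m : ℚ) / (n : ℚ))) = (commAlpha n) ^ m) ∧
      (∀ q : Multiplicative ℚ,
        Φ q ∈ Subgroup.closure {inl alpha, inr (ofAdd (1 : ℤ))}) := by
  refine ⟨Phi0, Phi0_injective, fun m n hn => Phi0_spec m n hn, fun q => ?_⟩
  set S : Set (Wr (Wr (Multiplicative ℚ) (Multiplicative ℤ)) (Multiplicative ℤ)) :=
    {inl alpha, inr (ofAdd (1 : ℤ))}
  have hA : inl alpha ∈ Subgroup.closure S := Subgroup.subset_closure (Set.mem_insert _ _)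
  have hZ : (inr (ofAdd (1 : ℤ)) :
      Wr (Wr (Multiplicative ℚ) (Multiplicative ℤ)) (Multiplicative ℤ)) ∈
      Subgroup.closure S :=
    Subgroup.subset_closure (Set.mem_insert_of_mem _ rfl)
  have hZn : ∀ k : ℤ, (inr (ofAdd k) :
      Wr (Wr (Multiplicative ℚ) (Multiplicative ℤ)) (Multiplicative ℤ)) ∈
      Subgroup.closure S := by
    intro k
    have : (inr (ofAdd k) :
        Wr (Wr (Multiplicative ℚ) (Multiplicative ℤ)) (Multiplicative ℤ)) =
        (inr (ofAdd (1 : ℤ))) ^ k := by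
      rw [← map_zpow, ← ofAdd_zsmul, smul_eq_mul, mul_one]
    rw [this]
    exact zpow_mem hZ k
  have hcomm : ∀ n : ℤ, commAlpha n ∈ Subgroup.closure S := by
    intro n
    have h1 : ((inr (ofAdd (-n)))⁻¹ * inl alpha * inr (ofAdd (-n)) :
        Wr (Wr (Multiplicative ℚ) (Multiplicative ℤ)) (Multiplicative ℤ)) ∈
        Subgroup.closure S :=
      mul_mem (mul_mem (inv_mem (hZn (-n))) hA) (hZn (-n))
    exact mul_mem (mul_mem (mul_mem (inv_mem h1) (inv_mem hA)) h1) hA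
  have hq : q = ofAdd (((q.toAdd.num : ℚ)) / (((q.toAdd.den : ℤ) : ℚ))) := by
    push_cast
    rw [Rat.num_div_den]
    exact (ofAdd_toAdd q).symm
  rw [hq, Phi0_spec _ _ (by exact_mod_cast q.toAdd.pos)]
  exact zpow_mem (hcomm _) _
end

section
/- There exists a 2-generator solvable group G of derived length 3 containing a subgroup isomorphic to the additive group ℚ of rational numbers. -/
open scoped commutatorElement

namespace HallQ

/-- the "twisting" function: `g n = 1/n!` for `n > 0`, else `0`. -/
def g (n : ℤ) : ℚ := if 0 < n then ((n.toNat).factorial : ℚ)⁻¹ else 0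

/-- shift of finitely supported functions -/
noncomputable def S (n : ℤ) : (ℤ →₀ ℤ) ≃+ (ℤ →₀ ℤ) := Finsupp.domCongr (Equiv.addRight n)

lemma S_single (n i a : ℤ) : S n (Finsupp.single i a) = Finsupp.single (i + n) a := by
  rw [S, Finsupp.domCongr_apply, Finsupp.equivMapDomain_single, Equiv.coe_addRight]

lemma S_apply (n : ℤ) (u : ℤ →₀ ℤ) (x : ℤ) : (S n u) x = u (x - n) := by
  rw [S, Finsupp.domCongr_apply, Finsupp.equivMapDomain_apply, Equiv.addRight_symm,
    Equiv.coe_addRight]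
  norm_num
  rfl

@[simp] lemma S_zero (u : ℤ →₀ ℤ) : S 0 u = u := by
  ext x; rw [S_apply]; norm_num

lemma S_S (m n : ℤ) (u : ℤ →₀ ℤ) : S m (S n u) = S (m + n) u := by
  ext x; rw [S_apply, S_apply, S_apply, sub_sub]

/-- inner pairing -/
noncomputable def lam (i : ℤ) : (ℤ →₀ ℤ) →+ ℚ :=
  Finsupp.liftAddHom fun j => zmultiplesHom ℚ (g (j - i))

lemma lam_single (i j b : ℤ) : lam i (Finsupp.single j b) = b • g (j - i) := by
  rw [lam, Finsupp.liftAddHom_apply_single, zmultiplesHom_apply]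

/-- the bilinear cocycle form -/
noncomputable def om : (ℤ →₀ ℤ) →+ (ℤ →₀ ℤ) →+ ℚ :=
  Finsupp.liftAddHom fun i => (zmultiplesHom _) (lam i)

lemma om_single_apply (i a : ℤ) (v : ℤ →₀ ℤ) : om (Finsupp.single i a) v = a • lam i v := by
  rw [om, Finsupp.liftAddHom_apply_single, zmultiplesHom_apply, AddMonoidHom.smul_apply]

lemma om_single_single (i a j b : ℤ) :
    om (Finsupp.single i a) (Finsupp.single j b) = a • b • g (j - i) := by
  rw [om_single_apply, lam_single]

lemma lam_shift (i n : ℤ) (v : ℤ →₀ ℤ) : lam (i + n) (S n v) = lam i v := by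
  induction v using Finsupp.induction with
  | zero => rw [map_zero (S n), map_zero, map_zero]
  | single_add j b f _ _ ih =>
    rw [map_add, map_add, map_add, ih, S_single, lam_single, lam_single,
      add_sub_add_right_eq_sub]

lemma om_shift (n : ℤ) (u v : ℤ →₀ ℤ) : om (S n u) (S n v) = om u v := by
  induction u using Finsupp.induction with
  | zero => rw [map_zero (S n), map_zero, AddMonoidHom.zero_apply, AddMonoidHom.zero_apply]
  | single_add i a f _ _ ih =>
    rw [map_add (S n), map_add om, map_add om, AddMonoidHom.add_apply, AddMonoidHom.add_apply,
      ih, S_single, om_single_apply, om_single_apply, lam_shift]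

/-- The group: a central extension of `(ℤ →₀ ℤ) ⋊ ℤ` by `ℚ` via the cocycle `om`. -/
@[ext] structure GG : Type where
  q : ℚ
  u : ℤ →₀ ℤ
  n : ℤ

noncomputable instance : Mul GG :=
  ⟨fun x y => ⟨x.q + y.q + om x.u (S x.n y.u), x.u + S x.n y.u, x.n + y.n⟩⟩
noncomputable instance : One GG := ⟨⟨0, 0, 0⟩⟩
noncomputable instance : Inv GG := ⟨fun x => ⟨-x.q + om x.u x.u, -(S (-x.n) x.u), -x.n⟩⟩

@[simp] lemma mul_q (x y : GG) : (x * y).q = x.q + y.q + om x.u (S x.n y.u) := rfl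
@[simp] lemma mul_u (x y : GG) : (x * y).u = x.u + S x.n y.u := rfl
@[simp] lemma mul_n (x y : GG) : (x * y).n = x.n + y.n := rfl
@[simp] lemma one_q : (1 : GG).q = 0 := rfl
@[simp] lemma one_u : (1 : GG).u = 0 := rfl
@[simp] lemma one_n : (1 : GG).n = 0 := rfl
@[simp] lemma inv_q (x : GG) : (x⁻¹).q = -x.q + om x.u x.u := rfl
@[simp] lemma inv_u (x : GG) : (x⁻¹).u = -(S (-x.n) x.u) := rfl
@[simp] lemma inv_n (x : GG) : (x⁻¹).n = -x.n := rfl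

lemma om_zero_left (v : ℤ →₀ ℤ) : om 0 v = 0 := by
  rw [map_zero, AddMonoidHom.zero_apply]

noncomputable instance : Group GG where
  mul := (· * ·)
  one := 1
  inv := (·⁻¹)
  mul_assoc x y z := by
    have h1 : S x.n (S y.n z.u) = S (x.n + y.n) z.u := S_S _ _ _
    refine GG.ext ?_ ?_ ?_
    · show x.q + y.q + om x.u (S x.n y.u) + z.q + om (x.u + S x.n y.u) (S (x.n + y.n) z.u)
        = x.q + (y.q + z.q + om y.u (S y.n z.u)) + om x.u (S x.n (y.u + S y.n z.u))
      rw [← h1, map_add (S x.n) y.u (S y.n z.u), map_add om x.u (S x.n y.u),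
        AddMonoidHom.add_apply, map_add (om x.u), om_shift]
      ring
    · show x.u + S x.n y.u + S (x.n + y.n) z.u = x.u + S x.n (y.u + S y.n z.u)
      rw [map_add (S x.n), ← h1, add_assoc]
    · show x.n + y.n + z.n = x.n + (y.n + z.n); ring
  one_mul x := by
    refine GG.ext ?_ ?_ ?_
    · show 0 + x.q + om 0 (S 0 x.u) = x.q
      rw [om_zero_left]; ring
    · show 0 + S 0 x.u = x.u
      rw [S_zero, zero_add]
    · show 0 + x.n = x.n; ring
  mul_one x := by
    refine GG.ext ?_ ?_ ?_
    · show x.q + 0 + om x.u (S x.n 0) = x.q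
      rw [map_zero (S x.n), map_zero]; ring
    · show x.u + S x.n 0 = x.u
      rw [map_zero (S x.n), add_zero]
    · show x.n + 0 = x.n; ring
  inv_mul_cancel x := by
    refine GG.ext ?_ ?_ ?_
    · show -x.q + om x.u x.u + x.q + om (-(S (-x.n) x.u)) (S (-x.n) x.u) = 0
      rw [map_neg om, AddMonoidHom.neg_apply, om_shift]
      ring
    · show -(S (-x.n) x.u) + S (-x.n) x.u = 0
      simp
    · show -x.n + x.n = 0; simp

end HallQ

namespace HallQ

lemma g_nonpos {n : ℤ} (h : n ≤ 0) : g n = 0 := by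
  rw [g, if_neg (by omega)]

@[simp] lemma g_zero : g 0 = 0 := g_nonpos le_rfl

/-- generators -/
noncomputable def aa : GG := ⟨0, 0, 1⟩
noncomputable def bb : GG := ⟨0, Finsupp.single 0 1, 0⟩

noncomputable def C : Subgroup GG := Subgroup.closure {aa, bb}

lemma aa_mem : aa ∈ C := Subgroup.subset_closure (by left; rfl)
lemma bb_mem : bb ∈ C := Subgroup.subset_closure (by right; rfl)

/-- central elements -/
noncomputable def cen (q : ℚ) : GG := ⟨q, 0, 0⟩

lemma cen_zero : cen 0 = 1 := rfl

lemma cen_mul (q r : ℚ) : cen q * cen r = cen (q + r) := by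
  refine GG.ext ?_ ?_ ?_
  · show q + r + om 0 (S 0 0) = q + r
    rw [om_zero_left, add_zero]
  · show 0 + S 0 (0:ℤ →₀ ℤ) = 0
    rw [map_zero, add_zero]
  · show (0:ℤ) + 0 = 0; rw [add_zero]

lemma cen_inv (q : ℚ) : (cen q)⁻¹ = cen (-q) := by
  refine GG.ext ?_ ?_ ?_
  · show -q + om 0 0 = -q
    rw [om_zero_left, add_zero]
  · show -(S (-(0:ℤ)) (0:ℤ →₀ ℤ)) = 0
    rw [map_zero, neg_zero]
  · show -(0:ℤ) = 0; rw [neg_zero]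

/-- the pure-translation elements `t k = ⟨0,0,k⟩` -/
noncomputable def tt (k : ℤ) : GG := ⟨0, 0, k⟩

lemma tt_mul_aa (k : ℤ) : tt k * aa = tt (k + 1) := by
  refine GG.ext ?_ ?_ ?_
  · show 0 + 0 + om 0 (S k 0) = 0
    rw [om_zero_left, add_zero, add_zero]
  · show 0 + S k (0:ℤ →₀ ℤ) = 0
    rw [map_zero, add_zero]
  · rfl

lemma aa_inv : aa⁻¹ = tt (-1) := by
  refine GG.ext ?_ ?_ ?_
  · show -0 + om 0 0 = 0
    rw [om_zero_left, neg_zero, add_zero]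
  · show -(S (-(1:ℤ)) (0:ℤ →₀ ℤ)) = 0
    rw [map_zero, neg_zero]
  · rfl

lemma tt_mul_aa_inv (k : ℤ) : tt k * aa⁻¹ = tt (k - 1) := by
  rw [aa_inv]
  refine GG.ext ?_ ?_ ?_
  · show 0 + 0 + om 0 (S k 0) = 0
    rw [om_zero_left, add_zero, add_zero]
  · show 0 + S k (0:ℤ →₀ ℤ) = 0
    rw [map_zero, add_zero]
  · rfl

lemma tt_mem (k : ℤ) : tt k ∈ C := by
  induction k using Int.induction_on with
  | zero => exact one_mem _
  | succ k ih => rw [← tt_mul_aa]; exact mul_mem ih aa_mem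
  | pred k ih =>
    have : tt (-k - 1) = tt (-k) * aa⁻¹ := (tt_mul_aa_inv _).symm
    rw [this]; exact mul_mem ih (inv_mem aa_mem)

/-- the "coordinate" elements `bel i = ⟨0, δᵢ, 0⟩` -/
noncomputable def bel (i : ℤ) : GG := ⟨0, Finsupp.single i 1, 0⟩

lemma bel_eq (i : ℤ) : bel i = tt i * bb * tt (-i) := by
  have h1 : tt i * bb = ⟨0, Finsupp.single i 1, i⟩ := by
    refine GG.ext ?_ ?_ ?_
    · show 0 + 0 + om 0 (S i (Finsupp.single 0 1)) = 0
      rw [om_zero_left, add_zero, add_zero]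
    · show 0 + S i (Finsupp.single 0 1) = Finsupp.single i 1
      rw [S_single, zero_add, zero_add]
    · show i + 0 = i; rw [add_zero]
  rw [h1]
  symm
  refine GG.ext ?_ ?_ ?_
  · show 0 + 0 + om (Finsupp.single i 1) (S i 0) = 0
    rw [map_zero (S i), map_zero, add_zero, add_zero]
  · show Finsupp.single i 1 + S i (0:ℤ →₀ ℤ) = Finsupp.single i 1
    rw [map_zero, add_zero]
  · show i + -i = 0; omega

lemma bel_mem (i : ℤ) : bel i ∈ C := by
  rw [bel_eq]
  exact mul_mem (mul_mem (tt_mem i) bb_mem) (tt_mem (-i))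

/-- multiplication of `n = 0` elements -/
lemma uel_mul (q₁ q₂ : ℚ) (u₁ u₂ : ℤ →₀ ℤ) :
    (⟨q₁, u₁, 0⟩ : GG) * ⟨q₂, u₂, 0⟩ = ⟨q₁ + q₂ + om u₁ u₂, u₁ + u₂, 0⟩ := by
  refine GG.ext ?_ ?_ ?_
  · show q₁ + q₂ + om u₁ (S 0 u₂) = q₁ + q₂ + om u₁ u₂
    rw [S_zero]
  · show u₁ + S 0 u₂ = u₁ + u₂
    rw [S_zero]
  · show (0:ℤ) + 0 = 0; rw [add_zero]

lemma uel_inv (q : ℚ) (u : ℤ →₀ ℤ) :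
    (⟨q, u, 0⟩ : GG)⁻¹ = ⟨-q + om u u, -u, 0⟩ := by
  refine GG.ext ?_ ?_ ?_
  · rfl
  · show -(S (-(0:ℤ)) u) = -u
    rw [neg_zero, S_zero]
  · show -(0:ℤ) = 0; rw [neg_zero]

lemma uel_comm (u v : ℤ →₀ ℤ) :
    ⁅(⟨0, u, 0⟩ : GG), ⟨0, v, 0⟩⁆ = cen (om u v - om v u) := by
  rw [commutatorElement_def, uel_inv, uel_inv, uel_mul, uel_mul]
  have h : u + v + -u = v := by abel
  rw [h, uel_mul]
  have h2 : v + -v = 0 := by abel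
  rw [h2]
  show (⟨_, _, 0⟩ : GG) = cen _
  rw [cen]
  congr 1
  · simp only [map_neg, map_add, AddMonoidHom.add_apply]
    ring

end HallQ

namespace HallQ

lemma cen_g_mem {n : ℤ} (hn : 0 < n) : cen (g n) ∈ C := by
  have hcomm : ⁅bel 0, bel n⁆ ∈ C :=
    mul_mem (mul_mem (mul_mem (bel_mem 0) (bel_mem n)) (inv_mem (bel_mem 0)))
      (inv_mem (bel_mem n))
  have heq : ⁅bel 0, bel n⁆ = cen (g n) := by
    rw [bel, bel, uel_comm, om_single_single, om_single_single]
    norm_num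
    rw [g_nonpos (by omega : -n ≤ 0), sub_zero]
  rwa [heq] at hcomm

lemma cen_zsmul_mem {x : ℚ} (hx : cen x ∈ C) : ∀ k : ℤ, cen (k * x) ∈ C := by
  intro k
  induction k using Int.induction_on with
  | zero => rw [Int.cast_zero, zero_mul, cen_zero]; exact one_mem _
  | succ k ih =>
    have : ((k : ℤ) + 1 : ℤ) * x = (k:ℤ) * x + x := by push_cast; ring
    rw [this, ← cen_mul]
    exact mul_mem ih hx
  | pred k ih =>
    have : ((-(k:ℤ) - 1 : ℤ) : ℚ) * x = (-(k:ℤ) : ℤ) * x + -x := by push_cast; ring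
    rw [this, ← cen_mul, ← cen_inv]
    exact mul_mem ih (inv_mem hx)

lemma cen_mem (q : ℚ) : cen q ∈ C := by
  set d := q.den with hd
  have hdpos : 0 < d := q.pos
  have h1 : cen (g d) ∈ C := cen_g_mem (by exact_mod_cast hdpos)
  have hg : g d = ((d.factorial : ℚ))⁻¹ := by
    rw [g, if_pos (by exact_mod_cast hdpos), Int.toNat_natCast]
  rw [hg] at h1
  have h2 := cen_zsmul_mem h1 (q.num * ((d - 1).factorial : ℤ))
  have h3 : d - 1 + 1 = d := by omega
  have hnat : d.factorial = d * (d - 1).factorial := by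
    conv_lhs => rw [← h3]
    rw [Nat.factorial_succ, h3]
  have hf0 : ((d - 1).factorial : ℚ) ≠ 0 := by
    exact_mod_cast (d - 1).factorial_pos.ne'
  have key : ((q.num * ((d - 1).factorial : ℤ) : ℤ) : ℚ) * ((d.factorial : ℚ))⁻¹ = q := by
    push_cast
    rw [show ((d.factorial : ℚ)) = (d : ℚ) * (((d - 1).factorial : ℚ)) by exact_mod_cast hnat]
    rw [mul_inv, mul_comm ((d : ℚ))⁻¹, ← mul_assoc, mul_assoc ((q.num : ℚ)),
      mul_inv_cancel₀ hf0, mul_one, ← div_eq_mul_inv]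
    exact_mod_cast Rat.num_div_den q
  rwa [key] at h2

end HallQ

namespace HallQ

lemma single_mem (i : ℤ) : ∀ k : ℤ, (⟨0, Finsupp.single i k, 0⟩ : GG) ∈ C := by
  intro k
  induction k using Int.induction_on with
  | zero =>
    have : (⟨0, Finsupp.single i 0, 0⟩ : GG) = 1 := by
      rw [Finsupp.single_zero]; rfl
    rw [this]; exact one_mem _
  | succ k ih =>
    have : (⟨0, Finsupp.single i (k + 1), 0⟩ : GG)
        = ⟨0, Finsupp.single i k, 0⟩ * bel i := by
      rw [bel, uel_mul, Finsupp.single_add, om_single_single]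
      norm_num
    rw [this]; exact mul_mem ih (bel_mem i)
  | pred k ih =>
    have hbi : (bel i)⁻¹ = ⟨0, Finsupp.single i (-1), 0⟩ := by
      rw [bel, uel_inv, om_single_single]
      norm_num
    have : (⟨0, Finsupp.single i (-k - 1), 0⟩ : GG)
        = ⟨0, Finsupp.single i (-k), 0⟩ * (bel i)⁻¹ := by
      rw [hbi, uel_mul, om_single_single, sub_self, g_zero, smul_zero, smul_zero]
      symm
      refine GG.ext ?_ ?_ ?_
      · show (0:ℚ) + 0 + 0 = 0; norm_num
      · show Finsupp.single i (-(k:ℤ)) + Finsupp.single i (-1) = Finsupp.single i (-(k:ℤ) - 1)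
        rw [← Finsupp.single_add]
        congr 1
      · rfl
    rw [this]; exact mul_mem ih (inv_mem (bel_mem i))

lemma uel_mem (u : ℤ →₀ ℤ) : ∀ q : ℚ, (⟨q, u, 0⟩ : GG) ∈ C := by
  induction u using Finsupp.induction with
  | zero => intro q; exact cen_mem q
  | single_add i k f _ _ ih =>
    intro q
    have : (⟨q, Finsupp.single i k + f, 0⟩ : GG)
        = ⟨0, Finsupp.single i k, 0⟩ * ⟨q - om (Finsupp.single i k) f, f, 0⟩ := by
      rw [uel_mul]
      congr 1
      ring
    rw [this]
    exact mul_mem (single_mem i k) (ih _)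

lemma gen_top : C = ⊤ := by
  rw [Subgroup.eq_top_iff']
  intro x
  have hx : x = ⟨x.q, x.u, 0⟩ * tt x.n := by
    symm
    refine GG.ext ?_ ?_ ?_
    · show x.q + 0 + om x.u (S 0 0) = x.q
      rw [map_zero, map_zero, add_zero, add_zero]
    · show x.u + S 0 (0 : ℤ →₀ ℤ) = x.u
      rw [map_zero, add_zero]
    · show (0:ℤ) + x.n = x.n
      rw [zero_add]
  rw [hx]
  exact mul_mem (uel_mem x.u x.q) (tt_mem x.n)

/-- subgroup of elements with trivial `ℤ`-part -/
noncomputable def Kn : Subgroup GG where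
  carrier := {x | x.n = 0}
  one_mem' := rfl
  mul_mem' := by
    intro x y hx hy
    show x.n + y.n = 0
    rw [Set.mem_setOf_eq] at hx hy
    omega
  inv_mem' := by
    intro x hx
    show -x.n = 0
    rw [Set.mem_setOf_eq] at hx
    omega

/-- the central copy of ℚ -/
noncomputable def Zc : Subgroup GG where
  carrier := {x | x.u = 0 ∧ x.n = 0}
  one_mem' := ⟨rfl, rfl⟩
  mul_mem' := by
    intro x y hx hy
    obtain ⟨hx1, hx2⟩ := hx
    obtain ⟨hy1, hy2⟩ := hy
    refine ⟨?_, ?_⟩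
    · show x.u + S x.n y.u = 0
      rw [hx1, hy1, map_zero, add_zero]
    · show x.n + y.n = 0
      omega
  inv_mem' := by
    intro x hx
    obtain ⟨hx1, hx2⟩ := hx
    refine ⟨?_, ?_⟩
    · show -(S (-x.n) x.u) = 0
      rw [hx1, map_zero, neg_zero]
    · show -x.n = 0
      omega

lemma mem_Kn {x : GG} : x ∈ Kn ↔ x.n = 0 := Iff.rfl
lemma mem_Zc {x : GG} : x ∈ Zc ↔ x.u = 0 ∧ x.n = 0 := Iff.rfl

lemma hD1 : derivedSeries GG 1 ≤ Kn := by
  rw [show (1:ℕ) = 0 + 1 from rfl, derivedSeries_succ]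
  rw [Subgroup.commutator_le]
  intro x _ y _
  rw [mem_Kn, commutatorElement_def]
  show x.n + y.n + -x.n + -y.n = 0
  omega

lemma hKK : ⁅Kn, Kn⁆ ≤ Zc := by
  rw [Subgroup.commutator_le]
  intro x hx y hy
  rw [mem_Kn] at hx hy
  rw [mem_Zc, commutatorElement_def]
  constructor
  · show x.u + S x.n y.u + S (x.n + y.n) (x⁻¹).u + S (x.n + y.n + (x⁻¹).n) (y⁻¹).u = 0
    rw [inv_u, inv_u, inv_n, hx, hy, neg_zero]
    simp only [S_zero, add_zero, zero_add, map_neg]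
    abel
  · show x.n + y.n + -x.n + -y.n = 0
    omega

lemma hD2 : derivedSeries GG 2 ≤ Zc := by
  rw [show (2:ℕ) = 1 + 1 from rfl, derivedSeries_succ]
  exact le_trans (Subgroup.commutator_mono hD1 hD1) hKK

lemma cen_comm (x y : GG) (hx : x ∈ Zc) (hy : y ∈ Zc) : ⁅x, y⁆ = 1 := by
  obtain ⟨hx1, hx2⟩ := hx
  obtain ⟨hy1, hy2⟩ := hy
  rw [commutatorElement_def]
  refine GG.ext ?_ ?_ ?_
  · show x.q + y.q + om x.u (S x.n y.u) + (x⁻¹).q + om ((x*y).u) (S ((x*y).n) (x⁻¹).u)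
      + ((y⁻¹).q) + om ((x*y*x⁻¹).u) (S ((x*y*x⁻¹).n) (y⁻¹).u) = 0
    rw [inv_q, inv_q]
    simp only [mul_u, mul_n, inv_u, inv_n, hx1, hy1, hx2, hy2, map_zero, om_zero_left,
      neg_zero, add_zero, zero_add, S_zero, map_neg, AddMonoidHom.neg_apply]
    ring
  · show x.u + S x.n y.u + S ((x*y).n) (x⁻¹).u + S ((x*y*x⁻¹).n) (y⁻¹).u = 0
    simp only [mul_n, inv_u, inv_n, hx1, hy1, hx2, hy2, map_zero,
      neg_zero, add_zero, zero_add, S_zero]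
  · show x.n + y.n + -x.n + -y.n = 0
    omega

lemma hD3 : derivedSeries GG 3 = ⊥ := by
  rw [eq_bot_iff, show (3:ℕ) = 2 + 1 from rfl, derivedSeries_succ, Subgroup.commutator_le]
  intro x hx y hy
  rw [Subgroup.mem_bot]
  exact cen_comm x y (hD2 hx) (hD2 hy)

end HallQ

namespace HallQ

lemma g_one : g 1 = 1 := by
  rw [g, if_pos one_pos]
  norm_num [Nat.factorial]

lemma g_two : g 2 = 1/2 := by
  rw [g, if_pos (by norm_num : (0:ℤ) < 2), show Int.toNat 2 = 2 from rfl]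
  norm_num [Nat.factorial]

lemma tt_inv (k : ℤ) : (tt k)⁻¹ = tt (-k) := by
  refine GG.ext ?_ ?_ ?_
  · show -0 + om 0 0 = 0
    rw [om_zero_left, neg_zero, add_zero]
  · show -(S (-k) (0:ℤ →₀ ℤ)) = 0
    rw [map_zero, neg_zero]
  · rfl

lemma tt_mul_bb (i : ℤ) : tt i * bb = ⟨0, Finsupp.single i 1, i⟩ := by
  refine GG.ext ?_ ?_ ?_
  · show 0 + 0 + om 0 (S i (Finsupp.single 0 1)) = 0
    rw [om_zero_left, add_zero, add_zero]
  · show 0 + S i (Finsupp.single 0 1) = Finsupp.single i 1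
    rw [S_single, zero_add, zero_add]
  · show i + 0 = i; rw [add_zero]

lemma bel_inv (i : ℤ) : (bel i)⁻¹ = ⟨0, Finsupp.single i (-1), 0⟩ := by
  rw [bel, uel_inv, om_single_single, sub_self, g_zero, smul_zero, smul_zero]
  refine GG.ext ?_ ?_ ?_
  · show -(0:ℚ) + 0 = 0; norm_num
  · show -(Finsupp.single i 1) = Finsupp.single i (-1)
    rw [← Finsupp.single_neg]
  · rfl

lemma comm_tt_bb (k : ℤ) (hk : 0 < k) :
    ⁅tt k, bb⁆ = ⟨0, Finsupp.single k 1 - Finsupp.single 0 1, 0⟩ := by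
  have h1 : tt k * bb * (tt k)⁻¹ = bel k := by
    rw [tt_inv, tt_mul_bb]
    symm
    rw [bel]
    symm
    refine GG.ext ?_ ?_ ?_
    · show 0 + 0 + om (Finsupp.single k 1) (S k 0) = 0
      rw [map_zero (S k), map_zero, add_zero, add_zero]
    · show Finsupp.single k 1 + S k (0:ℤ →₀ ℤ) = Finsupp.single k 1
      rw [map_zero, add_zero]
    · show k + -k = 0; omega
  have hbb : bb = bel 0 := rfl
  rw [commutatorElement_def, h1, hbb, bel_inv, bel, uel_mul, om_single_single]
  rw [g_nonpos (by omega : (0:ℤ) - k ≤ 0), smul_zero, smul_zero]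
  refine GG.ext ?_ ?_ ?_
  · show (0:ℚ) + 0 + 0 = 0; norm_num
  · show Finsupp.single k 1 + Finsupp.single 0 (-1)
      = Finsupp.single k 1 - Finsupp.single 0 1
    rw [Finsupp.single_neg]
    abel
  · rfl

lemma aa_eq_tt : aa = tt 1 := rfl

lemma aa_mul_aa : aa * aa = tt 2 := by
  refine GG.ext ?_ ?_ ?_
  · show 0 + 0 + om 0 (S 1 0) = 0
    rw [om_zero_left, add_zero, add_zero]
  · show 0 + S 1 (0:ℤ →₀ ℤ) = 0
    rw [map_zero, add_zero]
  · rfl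

lemma om_sub_sub (i j k l : ℤ) :
    om (Finsupp.single i 1 - Finsupp.single j 1) (Finsupp.single k 1 - Finsupp.single l 1)
      = g (k - i) - g (l - i) - g (k - j) + g (l - j) := by
  simp only [map_sub, AddMonoidHom.sub_apply, om_single_single, one_smul]
  ring

lemma w_eq : ⁅⁅aa, bb⁆, ⁅aa * aa, bb⁆⁆ = cen (3/2) := by
  rw [aa_mul_aa, aa_eq_tt, comm_tt_bb 1 one_pos, comm_tt_bb 2 (by norm_num),
    uel_comm, om_sub_sub, om_sub_sub]
  congr 1
  norm_num [g, Nat.factorial, show Int.toNat 2 = 2 from rfl]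

lemma hD2ne : derivedSeries GG 2 ≠ ⊥ := by
  have h1 : ⁅aa, bb⁆ ∈ derivedSeries GG 1 := by
    rw [show (1:ℕ) = 0 + 1 from rfl, derivedSeries_succ, derivedSeries_zero]
    exact Subgroup.commutator_mem_commutator (Subgroup.mem_top _) (Subgroup.mem_top _)
  have h2 : ⁅aa * aa, bb⁆ ∈ derivedSeries GG 1 := by
    rw [show (1:ℕ) = 0 + 1 from rfl, derivedSeries_succ, derivedSeries_zero]
    exact Subgroup.commutator_mem_commutator (Subgroup.mem_top _) (Subgroup.mem_top _)
  have hw : ⁅⁅aa, bb⁆, ⁅aa * aa, bb⁆⁆ ∈ derivedSeries GG 2 := by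
    rw [show (2:ℕ) = 1 + 1 from rfl, derivedSeries_succ]
    exact Subgroup.commutator_mem_commutator h1 h2
  intro hbot
  rw [hbot, Subgroup.mem_bot, w_eq] at hw
  have := congrArg GG.q hw
  simp only [cen, one_q] at this
  norm_num at this

/-- the central copy of ℚ is isomorphic to `Multiplicative ℚ` -/
noncomputable def iso : Zc ≃* Multiplicative ℚ where
  toFun x := Multiplicative.ofAdd ((x : GG).q)
  invFun q := ⟨⟨q.toAdd, 0, 0⟩, ⟨rfl, rfl⟩⟩
  left_inv x := by
    apply Subtype.ext
    refine GG.ext rfl ?_ ?_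
    · exact x.2.1.symm
    · exact x.2.2.symm
  right_inv q := rfl
  map_mul' x y := by
    have h : ((x * y : Zc) : GG).q = (x : GG).q + (y : GG).q := by
      show (x : GG).q + (y : GG).q + om (x : GG).u (S (x : GG).n (y : GG).u)
        = (x : GG).q + (y : GG).q
      rw [x.2.1, om_zero_left, add_zero]
    show Multiplicative.ofAdd ((x * y : Zc) : GG).q = _
    rw [h, ofAdd_add]

end HallQ

/-- There exists a 2-generator solvable group of derived length 3 containing a
subgroup isomorphic to the additive group ℚ of rational numbers. -/
theorem exists_two_generator_solvable_length_three_containing_q :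
    ∃ (G : Type) (_ : Group G),
      (∃ a b : G, Subgroup.closure {a, b} = ⊤) ∧
      derivedSeries G 3 = ⊥ ∧ derivedSeries G 2 ≠ ⊥ ∧
      ∃ Q : Subgroup G, Nonempty (Q ≃* Multiplicative ℚ) := by
  exact ⟨HallQ.GG, inferInstance, ⟨HallQ.aa, HallQ.bb, HallQ.gen_top⟩, HallQ.hD3,
    HallQ.hD2ne, HallQ.Zc, ⟨HallQ.iso⟩⟩
end

section
/- Let T Wr C be a Cartesian wreath product with C = ⟨c⟩ infinite cyclic, and for g ∈ T define π_g ∈ T^C by π_g(cⁱ) = g for i ≥ 0 and 1 for i < 0, and ρ_g ∈ T^C by ρ_g(c⁰) = g and ρ_g(cⁱ) = 1 for i ≠ 0. Then [π_{g⁻¹}, c] = ρ_g, and consequently the map g ↦ ρ_g is an injective homomorphism of T into the derived subgroup of D = ⟨π_g, c : g ∈ T⟩. -/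
open SemidirectProduct Multiplicative in
/-- In `T Wr C` with `C = ⟨c⟩` infinite cyclic, with `π_g(cⁱ) = g` for `i ≥ 0`
and `1` for `i < 0`, and `ρ_g` supported at `c⁰` with value `g`, one has
`[π_{g⁻¹}, c] = π_{g⁻¹}⁻¹ c⁻¹ π_{g⁻¹} c = ρ_g`; consequently `g ↦ ρ_g` is an
injective homomorphism of `T` into the derived subgroup of
`D = ⟨π_g, c : g ∈ T⟩`. -/
theorem rho_embedding_into_derived_subgroup (T : Type*) [Group T]
    (π ρ : T → (Multiplicative ℤ → T))
    (hπ : ∀ (g : T) (i : Multiplicative ℤ), π g i = if 0 ≤ i.toAdd then g else 1)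
    (hρ : ∀ (g : T) (i : Multiplicative ℤ), ρ g i = if i.toAdd = 0 then g else 1) :
    (∀ g : T,
      (inl (π g⁻¹) : Wr T (Multiplicative ℤ))⁻¹ * (inr (ofAdd (1 : ℤ)))⁻¹ *
        inl (π g⁻¹) * inr (ofAdd (1 : ℤ)) = inl (ρ g)) ∧
    ∃ f : T →* Wr T (Multiplicative ℤ),
      Function.Injective f ∧ (∀ g : T, f g = inl (ρ g)) ∧
      ∀ g : T, f g ∈
        ⁅(Subgroup.closure
            ({inr (ofAdd (1 : ℤ))} ∪ Set.range fun g : T => (inl (π g) : Wr T (Multiplicative ℤ)))),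
          (Subgroup.closure
            ({inr (ofAdd (1 : ℤ))} ∪ Set.range fun g : T => (inl (π g) : Wr T (Multiplicative ℤ))))⁆ := by
  have key : ∀ g : T,
      (inl (π g⁻¹) : Wr T (Multiplicative ℤ))⁻¹ * (inr (ofAdd (1 : ℤ)))⁻¹ *
        inl (π g⁻¹) * inr (ofAdd (1 : ℤ)) = inl (ρ g) := by
    intro g
    ext i
    · simp only [mul_left, mul_right, inv_left, inv_right, left_inl, right_inl, left_inr,
        right_inr]
      simp only [wrAct, MonoidHom.coe_mk, OneHom.coe_mk, MulEquiv.coe_mk,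
        Equiv.coe_fn_mk, Pi.mul_apply, Pi.inv_apply, Pi.one_apply]
      rw [hπ, hπ, hρ]
      have e1 : Multiplicative.toAdd (i * 1⁻¹) = Multiplicative.toAdd i := by simp
      have e2 : Multiplicative.toAdd (i * (1⁻¹ * (Multiplicative.ofAdd 1)⁻¹)) =
          Multiplicative.toAdd i - 1 := by simp; ring
      rw [e1, e2]
      split_ifs <;> first | omega | group
    · simp
  refine ⟨key, ?_⟩
  have hmul : ∀ a b : T, (inl (ρ (a * b)) : Wr T (Multiplicative ℤ)) = inl (ρ a) * inl (ρ b) := by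
    intro a b
    rw [← map_mul]
    refine congrArg _ ?_
    funext i
    simp only [Pi.mul_apply, hρ]
    split <;> simp
  refine ⟨MonoidHom.mk' (fun g => inl (ρ g)) hmul, ?_, fun g => rfl, ?_⟩
  · intro a b hab
    have := congrArg (fun x : Wr T (Multiplicative ℤ) => x.left (ofAdd (0 : ℤ))) hab
    simpa [hρ] using this
  · intro g
    have hx : (inl (π g⁻¹) : Wr T (Multiplicative ℤ))⁻¹ ∈
        Subgroup.closure ({inr (ofAdd (1 : ℤ))} ∪
          Set.range fun g : T => (inl (π g) : Wr T (Multiplicative ℤ))) :=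
      Subgroup.inv_mem _ (Subgroup.subset_closure (Or.inr ⟨g⁻¹, rfl⟩))
    have hy : (inr (ofAdd (1 : ℤ)) : Wr T (Multiplicative ℤ))⁻¹ ∈
        Subgroup.closure ({inr (ofAdd (1 : ℤ))} ∪
          Set.range fun g : T => (inl (π g) : Wr T (Multiplicative ℤ))) :=
      Subgroup.inv_mem _ (Subgroup.subset_closure (Or.inl rfl))
    open scoped commutatorElement in
    have hc : (inl (ρ g) : Wr T (Multiplicative ℤ)) =
        ⁅(inl (π g⁻¹) : Wr T (Multiplicative ℤ))⁻¹, (inr (ofAdd (1 : ℤ)))⁻¹⁆ := by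
      rw [commutatorElement_def, inv_inv, inv_inv, ← key g]
    show (inl (ρ g) : Wr T (Multiplicative ℤ)) ∈ _
    rw [hc]
    exact Subgroup.commutator_mem_commutator hx hy
end
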